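/- Let F be a field, f ∈ F[x_1,...,x_n] a nonzero polynomial of total degree at most d, and let r_1,...,r_n be independent uniformly random elements of a finite subset (or of the finite field) F. Then the probability that f(r_1,...,r_n) = 0 is at most d/|F|. -/
import Mathlib

open MvPolynomial

lemma sz_card_key {F : Type*} [Field F] [Fintype F] [DecidableEq F] :
    ∀ (n d : ℕ) (f : MvPolynomial (Fin n) F), f ≠ 0 → f.totalDegree ≤ d →
      (Finset.univ.filter fun r : Fin n → F => eval r f = 0).card * Fintype.card F ≤
        d * Fintype.card F ^ n := by
  intro n
  induction n with
  | zero =>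
    intro d f hf _
    have h0 : (Finset.univ.filter fun r : Fin 0 → F => eval r f = 0).card = 0 := by
      rw [Finset.card_eq_zero, Finset.filter_eq_empty_iff]
      intro r _
      obtain ⟨a, rfl⟩ := MvPolynomial.C_surjective (Fin 0) f
      have ha : a ≠ 0 := by rintro rfl; simp at hf
      simpa using ha
    rw [h0]
    simp
  | succ n ih =>
    intro d f hf hdeg
    set q := Fintype.card F with hq
    set p := finSuccEquiv F n f with hp
    have hpne : p ≠ 0 := by
      simpa [hp] using (map_ne_zero_iff _ (finSuccEquiv F n).injective).2 hf
    set k := p.natDegree with hk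
    have hlead : p.coeff k ≠ 0 := Polynomial.leadingCoeff_ne_zero.2 hpne
    have hkd : k ≤ d := by
      have := natDegree_finSuccEquiv f
      calc k = degreeOf 0 f := by rw [hk, hp, this]
        _ ≤ f.totalDegree := degreeOf_le_totalDegree f 0
        _ ≤ d := hdeg
    have hcoeffdeg : (p.coeff k).totalDegree ≤ d - k := by
      have h := totalDegree_coeff_finSuccEquiv_add_le f k (by rwa [← hp])
      rw [← hp] at h
      omega
    -- the "bad" set of s where the leading coefficient vanishes
    set A := Finset.univ.filter fun s : Fin n → F => eval s (p.coeff k) = 0 with hA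
    have hAcard : A.card * q ≤ (d - k) * q ^ n := ih (d - k) (p.coeff k) hlead hcoeffdeg
    -- count roots fiberwise
    have key : (Finset.univ.filter fun r : Fin (n + 1) → F => eval r f = 0).card =
        ∑ s : Fin n → F,
          (Finset.univ.filter fun x : F =>
            (Polynomial.map (eval s) p).eval x = 0).card := by
      rw [Finset.card_filter]
      rw [← (Fin.consEquiv fun _ : Fin (n + 1) => F).sum_comp
        (fun r => if eval r f = 0 then 1 else 0)]
      rw [Fintype.sum_prod_type_right]
      refine Finset.sum_congr rfl fun s _ => ?_
      rw [Finset.card_filter]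
      refine Finset.sum_congr rfl fun x _ => ?_
      congr 1
      rw [show ((Fin.consEquiv fun _ : Fin (n + 1) => F) (x, s)) = Fin.cons x s from rfl,
        eval_eq_eval_mv_eval', hp]
    -- bound each fiber
    have fiber_bound : ∀ s : Fin n → F,
        (Finset.univ.filter fun x : F =>
          (Polynomial.map (eval s) p).eval x = 0).card ≤ if s ∈ A then q else k := by
      intro s
      by_cases hs : s ∈ A
      · simp only [hs, if_true]
        exact (Finset.card_filter_le _ _).trans (by simp [hq])
      · simp only [hs, if_false]
        have hmapne : Polynomial.map (eval s) p ≠ 0 := by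
          intro h0
          apply hs
          simp only [hA, Finset.mem_filter, Finset.mem_univ, true_and]
          have := congrArg (fun g => Polynomial.coeff g k) h0
          simpa [Polynomial.coeff_map] using this
        calc (Finset.univ.filter fun x : F =>
              (Polynomial.map (eval s) p).eval x = 0).card
            ≤ (Polynomial.map (eval s) p).roots.toFinset.card := by
              apply Finset.card_le_card
              intro x hx
              simp only [Finset.mem_filter] at hx
              simp [Multiset.mem_toFinset, Polynomial.mem_roots, hmapne,
                Polynomial.IsRoot, hx.2]
          _ ≤ Multiset.card (Polynomial.map (eval s) p).roots :=
              Multiset.toFinset_card_le _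
          _ ≤ (Polynomial.map (eval s) p).natDegree := Polynomial.card_roots' _
          _ ≤ k := Polynomial.natDegree_map_le
    have total : (Finset.univ.filter fun r : Fin (n + 1) → F => eval r f = 0).card ≤
        A.card * q + q ^ n * k := by
      rw [key]
      calc ∑ s : Fin n → F, (Finset.univ.filter fun x : F =>
              (Polynomial.map (eval s) p).eval x = 0).card
          ≤ ∑ s : Fin n → F, (if s ∈ A then q else k) :=
            Finset.sum_le_sum fun s _ => fiber_bound s
        _ = A.card * q + (Finset.univ \ A).card * k := by
            rw [Finset.sum_ite, Finset.sum_const, Finset.sum_const, Finset.filter_univ_mem,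
              Finset.filter_not, Finset.filter_univ_mem, smul_eq_mul, smul_eq_mul]
        _ ≤ A.card * q + q ^ n * k := by
            gcongr
            calc (Finset.univ \ A).card ≤ (Finset.univ : Finset (Fin n → F)).card :=
                Finset.card_le_card (Finset.sdiff_subset)
              _ = q ^ n := by simp [Fintype.card_fun, hq]
    calc (Finset.univ.filter fun r : Fin (n + 1) → F => eval r f = 0).card * q
        ≤ (A.card * q + q ^ n * k) * q := by gcongr
      _ = A.card * q * q + k * q ^ n * q := by ring
      _ ≤ (d - k) * q ^ n * q + k * q ^ n * q := by gcongr
      _ = ((d - k) + k) * q ^ (n + 1) := by ring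
      _ = d * q ^ (n + 1) := by rw [Nat.sub_add_cancel hkd]

/-- **Schwartz–Zippel lemma.** If `f` is a nonzero polynomial over a finite field `F` in `n`
variables of total degree at most `d`, and `r : Fin n → F` is chosen uniformly at random,
then the probability that `f(r) = 0` is at most `d / |F|`. -/
theorem schwartz_zippel {F : Type*} [Field F] [Fintype F] [DecidableEq F]
    {n d : ℕ} (f : MvPolynomial (Fin n) F) (hf : f ≠ 0) (hdeg : f.totalDegree ≤ d) :
    ((Finset.univ.filter fun r : Fin n → F => eval r f = 0).card : ℚ) /
        (Fintype.card (Fin n → F) : ℚ) ≤ (d : ℚ) / (Fintype.card F : ℚ) := by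
  have hq : 0 < Fintype.card F := Fintype.card_pos
  have hkey := sz_card_key n d f hf hdeg
  have hcard : Fintype.card (Fin n → F) = Fintype.card F ^ n := by
    simp [Fintype.card_fun]
  rw [hcard]
  rw [div_le_div_iff₀ (by positivity) (by positivity)]
  have := (Nat.cast_le (α := ℚ)).2 hkey
  push_cast at this ⊢
  linarith
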